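/- Let Φ_h(u) = F⁻¹[F(u) + hG(u)] as above, and let Ψ[σ] : B_r(0) → ℝⁿ be a family of C² maps depending C² on the parameter σ ∈ ℝ with Ψ[0] = id. Then there exists C > 0 such that for all u ∈ B_r(0), all σ with |σ| sufficiently small, and all h > 0 sufficiently small, |Φ_h(Ψ[σ](u)) − Ψ[σ](Φ_h(u))| ≤ C·|σ|·h·γ. -/

import Mathlib

set_option maxHeartbeats 1000000

open Metric Set
open scoped NNReal

lemma antilip_aux {n : ℕ} {r r' : ℝ} (hr : 0 < r) (hrr' : r < r')
    {F : EuclideanSpace ℝ (Fin n) → EuclideanSpace ℝ (Fin n)}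
    {DF : EuclideanSpace ℝ (Fin n) →
      (EuclideanSpace ℝ (Fin n) ≃L[ℝ] EuclideanSpace ℝ (Fin n))}
    (hF : ContDiffOn ℝ 2 F (closedBall 0 r'))
    (hDF : ∀ u ∈ closedBall (0 : EuclideanSpace ℝ (Fin n)) r',
      HasFDerivAt F (DF u : EuclideanSpace ℝ (Fin n) →L[ℝ] EuclideanSpace ℝ (Fin n)) u)
    (hFinj : Set.InjOn F (closedBall 0 r')) :
    ∃ c : ℝ, 0 < c ∧ ∀ a ∈ closedBall (0 : EuclideanSpace ℝ (Fin n)) r,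
      ∀ b ∈ closedBall (0 : EuclideanSpace ℝ (Fin n)) r, ‖a - b‖ ≤ c * ‖F a - F b‖ := by
  have hKrr' : closedBall (0 : EuclideanSpace ℝ (Fin n)) r ⊆ closedBall 0 r' :=
    closedBall_subset_closedBall hrr'.le
  have hKrb : closedBall (0 : EuclideanSpace ℝ (Fin n)) r ⊆ ball 0 r' :=
    closedBall_subset_ball hrr'
  have hcomp : IsCompact (closedBall (0 : EuclideanSpace ℝ (Fin n)) r) :=
    isCompact_closedBall _ _
  -- local antilipschitz
  have loc : ∀ x ∈ closedBall (0 : EuclideanSpace ℝ (Fin n)) r,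
      ∃ s : Set (EuclideanSpace ℝ (Fin n)), IsOpen s ∧ x ∈ s ∧ ∃ K : ℝ≥0,
      ∀ a ∈ s, ∀ b ∈ s, ‖a - b‖ ≤ (K : ℝ) * ‖F a - F b‖ := by
    intro x hx
    have hx' : x ∈ ball (0 : EuclideanSpace ℝ (Fin n)) r' := hKrb hx
    have hcd : ContDiffAt ℝ 2 F x :=
      (hF.mono ball_subset_closedBall).contDiffAt (isOpen_ball.mem_nhds hx')
    have hstrict : HasStrictFDerivAt F
        ((DF x : EuclideanSpace ℝ (Fin n) →L[ℝ] EuclideanSpace ℝ (Fin n))) x :=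
      hcd.hasStrictFDerivAt' (hDF x (ball_subset_closedBall hx')) two_ne_zero
    obtain ⟨s, hxs, hso, happ⟩ := hstrict.approximates_deriv_on_open_nhds
    set N := ‖((DF x).symm : EuclideanSpace ℝ (Fin n) →L[ℝ] EuclideanSpace ℝ (Fin n))‖₊ with hN
    have hanti : AntilipschitzWith (N⁻¹ - N⁻¹ / 2)⁻¹ (s.restrict F) :=
      happ.antilipschitz ((DF x).subsingleton_or_nnnorm_symm_pos.imp id fun h' =>
        NNReal.half_lt_self (ne_of_gt (inv_pos.2 h')))
    refine ⟨s, hso, hxs, (N⁻¹ - N⁻¹ / 2)⁻¹, fun a ha b hb => ?_⟩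
    have := hanti.le_mul_dist ⟨a, ha⟩ ⟨b, hb⟩
    simpa [Subtype.dist_eq, dist_eq_norm, Set.restrict] using this
  choose s hso hxs K hKb using loc
  -- finite subcover
  obtain ⟨t, ht⟩ := hcomp.elim_nhds_subcover' (fun x hx => s x hx)
    (fun x hx => (hso x hx).mem_nhds (hxs x hx))
  have hcover : closedBall (0 : EuclideanSpace ℝ (Fin n)) r ⊆ ⋃ i : t, s i.1.1 i.1.2 := by
    intro x hx
    obtain ⟨i, hi, hxi⟩ := Set.mem_iUnion₂.1 (ht hx)
    exact Set.mem_iUnion.2 ⟨⟨i, hi⟩, hxi⟩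
  obtain ⟨δ, hδ, hleb⟩ := lebesgue_number_lemma_of_metric hcomp
    (fun i : t => hso i.1.1 i.1.2) hcover
  set Kmax : ℝ≥0 := t.sup fun i => K i.1 i.2 with hKmax
  -- far pairs
  obtain ⟨c₂, hc₂0, hc₂⟩ : ∃ c₂ : ℝ, 0 ≤ c₂ ∧
      ∀ a ∈ closedBall (0 : EuclideanSpace ℝ (Fin n)) r,
      ∀ b ∈ closedBall (0 : EuclideanSpace ℝ (Fin n)) r, δ ≤ dist a b →
      ‖a - b‖ ≤ c₂ * ‖F a - F b‖ := by
    set S : Set (EuclideanSpace ℝ (Fin n) × EuclideanSpace ℝ (Fin n)) :=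
      (closedBall 0 r ×ˢ closedBall 0 r) ∩ {p | δ ≤ dist p.1 p.2} with hS
    have hSc : IsCompact S := (hcomp.prod hcomp).inter_right
      (isClosed_le continuous_const (continuous_fst.dist continuous_snd))
    rcases S.eq_empty_or_nonempty with hSe | hSne
    · refine ⟨1, zero_le_one, fun a ha b hb hab => absurd ?_ (Set.not_nonempty_iff_eq_empty.2 hSe)⟩
      exact ⟨(a, b), ⟨⟨ha, hb⟩, hab⟩⟩
    · have hFc : ContinuousOn (fun p : EuclideanSpace ℝ (Fin n) × EuclideanSpace ℝ (Fin n) =>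
          ‖F p.1 - F p.2‖) S := by
        have h1 : ContinuousOn (fun p : EuclideanSpace ℝ (Fin n) × EuclideanSpace ℝ (Fin n) =>
            F p.1) S := hF.continuousOn.comp continuousOn_fst
          (fun p hp => hKrr' hp.1.1)
        have h2 : ContinuousOn (fun p : EuclideanSpace ℝ (Fin n) × EuclideanSpace ℝ (Fin n) =>
            F p.2) S := hF.continuousOn.comp continuousOn_snd
          (fun p hp => hKrr' hp.1.2)
        exact (h1.sub h2).norm
      obtain ⟨p₀, hp₀S, hp₀min⟩ := hSc.exists_isMinOn hSne hFc
      obtain ⟨⟨hp1, hp2⟩, hpd⟩ := hp₀S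
      have hpd' : δ ≤ dist p₀.1 p₀.2 := hpd
      have hm : 0 < ‖F p₀.1 - F p₀.2‖ := by
        rw [norm_pos_iff, sub_ne_zero]
        intro hEq
        have h12 : p₀.1 = p₀.2 := hFinj (hKrr' hp1) (hKrr' hp2) hEq
        have hd0 : dist p₀.1 p₀.2 = 0 := by rw [h12, dist_self]
        linarith
      refine ⟨2 * r / ‖F p₀.1 - F p₀.2‖, by positivity, fun a ha b hb hab => ?_⟩
      have h1 : ‖a - b‖ ≤ 2 * r := by
        calc ‖a - b‖ ≤ ‖a‖ + ‖b‖ := norm_sub_le a b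
          _ ≤ r + r := add_le_add (mem_closedBall_zero_iff.1 ha) (mem_closedBall_zero_iff.1 hb)
          _ = 2 * r := by ring
      have h2 : ‖F p₀.1 - F p₀.2‖ ≤ ‖F a - F b‖ := isMinOn_iff.1 hp₀min (a, b) ⟨⟨ha, hb⟩, hab⟩
      rw [div_mul_eq_mul_div, le_div_iff₀ hm]
      calc ‖a - b‖ * ‖F p₀.1 - F p₀.2‖ ≤ 2 * r * ‖F a - F b‖ :=
            mul_le_mul h1 h2 (norm_nonneg _) (by positivity)
        _ = 2 * r * ‖F a - F b‖ := by ring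
  refine ⟨max (Kmax : ℝ) c₂ + 1, by positivity, fun a ha b hb => ?_⟩
  have hFab : (0 : ℝ) ≤ ‖F a - F b‖ := norm_nonneg _
  rcases lt_or_ge (dist a b) δ with hnear | hfar
  · obtain ⟨i, hball⟩ := hleb a ha
    have hai : a ∈ s i.1.1 i.1.2 := hball (mem_ball_self hδ)
    have hbi : b ∈ s i.1.1 i.1.2 := hball (by simpa [mem_ball, dist_comm] using hnear)
    have hKle : (K i.1.1 i.1.2 : ℝ) ≤ max (Kmax : ℝ) c₂ + 1 := by
      have hle : K i.1.1 i.1.2 ≤ Kmax := Finset.le_sup (f := fun j : ↥(closedBall (0 : EuclideanSpace ℝ (Fin n)) r) => K j.1 j.2) i.2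
      have : (K i.1.1 i.1.2 : ℝ) ≤ (Kmax : ℝ) := by exact_mod_cast hle
      have := le_max_left (Kmax : ℝ) c₂
      linarith
    calc ‖a - b‖ ≤ (K i.1.1 i.1.2 : ℝ) * ‖F a - F b‖ := hKb i.1.1 i.1.2 a hai b hbi
      _ ≤ (max (Kmax : ℝ) c₂ + 1) * ‖F a - F b‖ := mul_le_mul_of_nonneg_right hKle hFab
  · calc ‖a - b‖ ≤ c₂ * ‖F a - F b‖ := hc₂ a ha b hb hfar
      _ ≤ (max (Kmax : ℝ) c₂ + 1) * ‖F a - F b‖ := by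
          apply mul_le_mul_of_nonneg_right _ hFab
          have := le_max_right (Kmax : ℝ) c₂
          linarith

lemma lip_aux {E F : Type*} [NormedAddCommGroup E] [NormedSpace ℝ E]
    [NormedAddCommGroup F] [NormedSpace ℝ F]
    {f : E → F} {U K : Set E} (hU : IsOpen U) (hf : ContDiffOn ℝ 2 f U)
    (hK : IsCompact K) (hKc : Convex ℝ K) (hKU : K ⊆ U) :
    ∃ M : ℝ, 0 ≤ M ∧ (∀ p ∈ K, ∀ q ∈ K, ‖f p - f q‖ ≤ M * ‖p - q‖) ∧
      (∀ p ∈ K, ∀ q ∈ K, ‖fderiv ℝ f p - fderiv ℝ f q‖ ≤ M * ‖p - q‖) := by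
  have hA : ContDiffOn ℝ 1 (fderiv ℝ f) U := hf.fderiv_of_isOpen hU (by norm_num)
  -- bound on fderiv f on K
  obtain ⟨M₁, hM₁⟩ := hK.exists_bound_of_continuousOn (hA.continuousOn.mono hKU)
  -- bound on fderiv (fderiv f) on K
  obtain ⟨M₂, hM₂⟩ := hK.exists_bound_of_continuousOn
    ((hA.continuousOn_fderiv_of_isOpen hU le_rfl).mono hKU)
  refine ⟨max (max M₁ M₂) 0, le_max_right _ _, ?_, ?_⟩
  · intro p hp q hq
    have := Convex.norm_image_sub_le_of_norm_hasFDerivWithin_le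
      (f := f) (f' := fderiv ℝ f) (C := max (max M₁ M₂) 0) (s := K)
      (fun x hx => ((hf.contDiffAt (hU.mem_nhds (hKU hx))).differentiableAt
        two_ne_zero).hasFDerivAt.hasFDerivWithinAt)
      (fun x hx => le_trans (hM₁ x hx) (le_trans (le_max_left _ _) (le_max_left _ _)))
      hKc hq hp
    simpa using this
  · intro p hp q hq
    have := Convex.norm_image_sub_le_of_norm_hasFDerivWithin_le
      (f := fderiv ℝ f) (f' := fderiv ℝ (fderiv ℝ f)) (C := max (max M₁ M₂) 0) (s := K)
      (fun x hx => ((hA.contDiffAt (hU.mem_nhds (hKU hx))).differentiableAt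
        one_ne_zero).hasFDerivAt.hasFDerivWithinAt)
      (fun x hx => le_trans (hM₂ x hx) (le_trans (le_max_right _ _) (le_max_left _ _)))
      hKc hq hp
    simpa using this

/-- Commutator estimate between the zero-wave map `Φ_h` and the elementary wave curve maps
`Ψ[σ]`: `‖Φ_h(Ψ[σ](u)) − Ψ[σ](Φ_h(u))‖ ≤ C·|σ|·h·γ` for `u ∈ B_r(0)`, `|σ|` and `h`
sufficiently small. -/
theorem stmt_3 (n : ℕ) (r r' γ : ℝ) (hr : 0 < r) (hrr' : r < r')
    (F G : EuclideanSpace ℝ (Fin n) → EuclideanSpace ℝ (Fin n))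
    (Φ : ℝ → EuclideanSpace ℝ (Fin n) → EuclideanSpace ℝ (Fin n))
    (Ψ : ℝ → EuclideanSpace ℝ (Fin n) → EuclideanSpace ℝ (Fin n))
    (DF : EuclideanSpace ℝ (Fin n) →
      (EuclideanSpace ℝ (Fin n) ≃L[ℝ] EuclideanSpace ℝ (Fin n)))
    (hF : ContDiffOn ℝ 2 F (closedBall 0 r'))
    (hDF : ∀ u ∈ closedBall (0 : EuclideanSpace ℝ (Fin n)) r',
      HasFDerivAt F (DF u : EuclideanSpace ℝ (Fin n) →L[ℝ] EuclideanSpace ℝ (Fin n)) u)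
    (hFinj : Set.InjOn F (closedBall 0 r'))
    (hG : ContDiff ℝ 2 G) (hG0 : G 0 = 0)
    (hγbd : ∀ u ∈ closedBall (0 : EuclideanSpace ℝ (Fin n)) r', ‖G u‖ ≤ γ)
    (hγlip : ∀ u ∈ closedBall (0 : EuclideanSpace ℝ (Fin n)) r',
      ∀ v ∈ closedBall (0 : EuclideanSpace ℝ (Fin n)) r', ‖G u - G v‖ ≤ γ * ‖u - v‖)
    (hΨ : ContDiff ℝ 2 (fun p : ℝ × EuclideanSpace ℝ (Fin n) => Ψ p.1 p.2))
    (hΨ0 : ∀ u, Ψ 0 u = u)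
    (σ₁ : ℝ) (hσ₁ : 0 < σ₁)
    (hΨball : ∀ σ : ℝ, |σ| ≤ σ₁ → ∀ u ∈ closedBall (0 : EuclideanSpace ℝ (Fin n)) r,
      Ψ σ u ∈ closedBall (0 : EuclideanSpace ℝ (Fin n)) r)
    (h₁ : ℝ) (hh₁ : 0 < h₁)
    (hΦ : ∀ h ∈ Set.Ioo (0 : ℝ) h₁, ∀ u ∈ closedBall (0 : EuclideanSpace ℝ (Fin n)) r,
      Φ h u ∈ closedBall (0 : EuclideanSpace ℝ (Fin n)) r ∧
        F (Φ h u) = F u + h • G u) :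
    ∃ C > (0 : ℝ), ∃ σ₀ > (0 : ℝ), ∃ h₀ > (0 : ℝ),
      ∀ u ∈ closedBall (0 : EuclideanSpace ℝ (Fin n)) r, ∀ σ : ℝ, |σ| ≤ σ₀ →
        ∀ h : ℝ, 0 < h → h < h₀ →
          ‖Φ h (Ψ σ u) - Ψ σ (Φ h u)‖ ≤ C * |σ| * h * γ := by
  have hKrr' : closedBall (0 : EuclideanSpace ℝ (Fin n)) r ⊆ closedBall 0 r' :=
    closedBall_subset_closedBall hrr'.le
  have hKrb : closedBall (0 : EuclideanSpace ℝ (Fin n)) r ⊆ ball 0 r' :=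
    closedBall_subset_ball hrr'
  have hγ0 : 0 ≤ γ := (norm_nonneg (G 0)).trans
    (hγbd 0 (mem_closedBall_self (by linarith)))
  obtain ⟨c, hc0, hc⟩ := antilip_aux hr hrr' hF hDF hFinj
  obtain ⟨Θ, hΘdef⟩ : ∃ Θ' : ℝ × EuclideanSpace ℝ (Fin n) → EuclideanSpace ℝ (Fin n),
      Θ' = fun p => F (Ψ p.1 p.2) := ⟨_, rfl⟩
  set U : Set (ℝ × EuclideanSpace ℝ (Fin n)) :=
    (fun p : ℝ × EuclideanSpace ℝ (Fin n) => Ψ p.1 p.2) ⁻¹' (ball 0 r') with hUdef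
  have hUopen : IsOpen U := isOpen_ball.preimage hΨ.continuous
  have hΘ : ContDiffOn ℝ 2 Θ U := by
    rw [hΘdef]
    exact (hF.mono ball_subset_closedBall).comp hΨ.contDiffOn (fun p hp => hp)
  set Kset : Set (ℝ × EuclideanSpace ℝ (Fin n)) :=
    Set.Icc (-σ₁) σ₁ ×ˢ closedBall 0 r with hKsetdef
  have hKsub : Kset ⊆ U := by
    rintro ⟨τ, w⟩ ⟨hτ, hw⟩
    exact hKrb (hΨball τ (abs_le.2 ⟨hτ.1, hτ.2⟩) w hw)
  have hKcomp : IsCompact Kset := isCompact_Icc.prod (isCompact_closedBall _ _)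
  have hKconv : Convex ℝ Kset := (convex_Icc _ _).prod (convex_closedBall _ _)
  obtain ⟨M, hM0, hMlip, hMder⟩ := lip_aux hUopen hΘ hKcomp hKconv hKsub
  obtain ⟨L, hL0, hLlip, -⟩ := lip_aux isOpen_univ hΨ.contDiffOn hKcomp hKconv
    (Set.subset_univ _)
  refine ⟨c * (M * c + L) + 1, by positivity, σ₁, hσ₁, h₁, hh₁, ?_⟩
  intro u hu σ hσ h hh0 hhh₁
  obtain ⟨hv, hFv⟩ := hΦ h ⟨hh0, hhh₁⟩ u hu
  have hw : Ψ σ u ∈ closedBall (0 : EuclideanSpace ℝ (Fin n)) r := hΨball σ hσ u hu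
  obtain ⟨ha, hFa⟩ := hΦ h ⟨hh0, hhh₁⟩ (Ψ σ u) hw
  have hb : Ψ σ (Φ h u) ∈ closedBall (0 : EuclideanSpace ℝ (Fin n)) r := hΨball σ hσ _ hv
  have hσIcc : σ ∈ Set.Icc (-σ₁) σ₁ := ⟨(abs_le.1 hσ).1, (abs_le.1 hσ).2⟩
  have h0Icc : (0 : ℝ) ∈ Set.Icc (-σ₁) σ₁ := ⟨by linarith, hσ₁.le⟩
  -- derivative of slice maps
  have key0 : ∀ p ∈ U, HasFDerivAt Θ (fderiv ℝ Θ p) p := fun p hp =>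
    ((hΘ.contDiffAt (hUopen.mem_nhds hp)).differentiableAt two_ne_zero).hasFDerivAt
  have hslice : ∀ w ∈ closedBall (0 : EuclideanSpace ℝ (Fin n)) r,
      ∀ τ ∈ Set.Icc (-σ₁) σ₁,
      HasFDerivAt (fun w' => Θ (τ, w'))
        ((fderiv ℝ Θ (τ, w)).comp
          (ContinuousLinearMap.inr ℝ ℝ (EuclideanSpace ℝ (Fin n)))) w := by
    intro w hw' τ hτ
    have hm : (τ, w) ∈ Kset := Set.mk_mem_prod hτ hw'
    have h1 := key0 (τ, w) (hKsub hm)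
    exact h1.comp w (hasFDerivAt_prodMk_right τ w)
  -- norm of (σ, w) - (0, w)
  have hnorm_sw : ∀ w : EuclideanSpace ℝ (Fin n),
      ‖((σ, w) : ℝ × EuclideanSpace ℝ (Fin n)) - (0, w)‖ = |σ| := by
    intro w
    have : ((σ, w) : ℝ × EuclideanSpace ℝ (Fin n)) - (0, w) = (σ, 0) := by
      simp [Prod.ext_iff]
    rw [this, Prod.norm_def]
    simp [Real.norm_eq_abs, abs_nonneg]
  -- mean value for g w = Θ(σ,w) - Θ(0,w)
  have hgmvt : ‖(Θ (σ, u) - Θ (0, u)) - (Θ (σ, Φ h u) - Θ (0, Φ h u))‖ ≤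
      (M * |σ|) * ‖u - Φ h u‖ := by
    have hbound : ∀ w ∈ closedBall (0 : EuclideanSpace ℝ (Fin n)) r,
        ‖(fderiv ℝ Θ (σ, w)).comp
            (ContinuousLinearMap.inr ℝ ℝ (EuclideanSpace ℝ (Fin n))) -
          (fderiv ℝ Θ (0, w)).comp
            (ContinuousLinearMap.inr ℝ ℝ (EuclideanSpace ℝ (Fin n)))‖ ≤ M * |σ| := by
      intro w hw'
      rw [← ContinuousLinearMap.sub_comp]
      have hd : ‖fderiv ℝ Θ (σ, w) - fderiv ℝ Θ (0, w)‖ ≤ M * |σ| := by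
        have := hMder (σ, w) ⟨hσIcc, hw'⟩ (0, w) ⟨h0Icc, hw'⟩
        rwa [hnorm_sw w] at this
      refine ContinuousLinearMap.opNorm_le_bound _
        (by positivity) (fun x => ?_)
      have h0 : ((fderiv ℝ Θ (σ, w) - fderiv ℝ Θ (0, w)).comp
          (ContinuousLinearMap.inr ℝ ℝ (EuclideanSpace ℝ (Fin n)))) x =
          (fderiv ℝ Θ (σ, w) - fderiv ℝ Θ (0, w)) ((0 : ℝ), x) := rfl
      have h1 : ‖(fderiv ℝ Θ (σ, w) - fderiv ℝ Θ (0, w)) (((0 : ℝ), x) :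
          ℝ × EuclideanSpace ℝ (Fin n))‖ ≤
          ‖fderiv ℝ Θ (σ, w) - fderiv ℝ Θ (0, w)‖ * ‖(((0 : ℝ), x) :
          ℝ × EuclideanSpace ℝ (Fin n))‖ :=
        ContinuousLinearMap.le_opNorm _ _
      have h2 : ‖(((0 : ℝ), x) : ℝ × EuclideanSpace ℝ (Fin n))‖ = ‖x‖ := by
        rw [Prod.norm_def]; simp
      rw [h2] at h1
      rw [h0]
      exact h1.trans (mul_le_mul_of_nonneg_right hd (norm_nonneg x))
    have := Convex.norm_image_sub_le_of_norm_hasFDerivWithin_le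
      (f := fun w => Θ (σ, w) - Θ (0, w))
      (f' := fun w => (fderiv ℝ Θ (σ, w)).comp
            (ContinuousLinearMap.inr ℝ ℝ (EuclideanSpace ℝ (Fin n))) -
          (fderiv ℝ Θ (0, w)).comp
            (ContinuousLinearMap.inr ℝ ℝ (EuclideanSpace ℝ (Fin n))))
      (s := closedBall 0 r) (C := M * |σ|)
      (fun w hw' => ((hslice w hw' σ hσIcc).sub (hslice w hw' 0 h0Icc)).hasFDerivWithinAt)
      hbound (convex_closedBall _ _) hv hu
    simpa using this
  -- ‖u - Φ h u‖ ≤ c * (h * γ)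
  have key1 : ‖u - Φ h u‖ ≤ c * (h * γ) := by
    have e1 : F u - F (Φ h u) = -(h • G u) := by rw [hFv]; abel
    have e2 : ‖F u - F (Φ h u)‖ = h * ‖G u‖ := by
      rw [e1, norm_neg, norm_smul, Real.norm_eq_abs, abs_of_pos hh0]
    calc ‖u - Φ h u‖ ≤ c * ‖F u - F (Φ h u)‖ := hc u hu _ hv
      _ = c * (h * ‖G u‖) := by rw [e2]
      _ ≤ c * (h * γ) := by
          have := hγbd u (hKrr' hu)
          apply mul_le_mul_of_nonneg_left _ hc0.le
          exact mul_le_mul_of_nonneg_left this hh0.le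
  -- ‖G (Ψ σ u) - G u‖ ≤ γ * (L * |σ|)
  have key3 : ‖G (Ψ σ u) - G u‖ ≤ γ * (L * |σ|) := by
    have hΨlip : ‖Ψ σ u - u‖ ≤ L * |σ| := by
      have := hLlip (σ, u) ⟨hσIcc, hu⟩ (0, u) ⟨h0Icc, hu⟩
      rw [hnorm_sw u] at this
      simpa [hΨ0] using this
    calc ‖G (Ψ σ u) - G u‖ ≤ γ * ‖Ψ σ u - u‖ := hγlip _ (hKrr' hw) _ (hKrr' hu)
      _ ≤ γ * (L * |σ|) := mul_le_mul_of_nonneg_left hΨlip hγ0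
  -- algebraic identity
  have Ffact : F (Φ h (Ψ σ u)) - F (Ψ σ (Φ h u)) =
      ((Θ (σ, u) - Θ (0, u)) - (Θ (σ, Φ h u) - Θ (0, Φ h u))) +
        h • (G (Ψ σ u) - G u) := by
    have hΘσu : Θ (σ, u) = F (Ψ σ u) := by rw [hΘdef]
    have hΘ0u : Θ (0, u) = F u := by rw [hΘdef]; simp [hΨ0]
    have hΘσv : Θ (σ, Φ h u) = F (Ψ σ (Φ h u)) := by rw [hΘdef]
    have hΘ0v : Θ (0, Φ h u) = F (Φ h u) := by rw [hΘdef]; simp [hΨ0]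
    rw [hΘσu, hΘ0u, hΘσv, hΘ0v, hFa, hFv, smul_sub]
    abel
  -- conclusion
  have hfinal : ‖Φ h (Ψ σ u) - Ψ σ (Φ h u)‖ ≤
      c * ((M * |σ|) * (c * (h * γ)) + h * (γ * (L * |σ|))) := by
    calc ‖Φ h (Ψ σ u) - Ψ σ (Φ h u)‖
        ≤ c * ‖F (Φ h (Ψ σ u)) - F (Ψ σ (Φ h u))‖ := hc _ ha _ hb
      _ ≤ c * ((M * |σ|) * (c * (h * γ)) + h * (γ * (L * |σ|))) := by
          apply mul_le_mul_of_nonneg_left _ hc0.le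
          rw [Ffact]
          calc ‖((Θ (σ, u) - Θ (0, u)) - (Θ (σ, Φ h u) - Θ (0, Φ h u))) +
                h • (G (Ψ σ u) - G u)‖
              ≤ ‖(Θ (σ, u) - Θ (0, u)) - (Θ (σ, Φ h u) - Θ (0, Φ h u))‖ +
                ‖h • (G (Ψ σ u) - G u)‖ := norm_add_le _ _
            _ ≤ (M * |σ|) * ‖u - Φ h u‖ + h * ‖G (Ψ σ u) - G u‖ := by
                rw [norm_smul, Real.norm_eq_abs, abs_of_pos hh0]
                exact add_le_add hgmvt le_rfl
            _ ≤ (M * |σ|) * (c * (h * γ)) + h * (γ * (L * |σ|)) := by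
                refine add_le_add ?_ ?_
                · exact mul_le_mul_of_nonneg_left key1 (by positivity)
                · exact mul_le_mul_of_nonneg_left key3 hh0.le
  calc ‖Φ h (Ψ σ u) - Ψ σ (Φ h u)‖
      ≤ c * ((M * |σ|) * (c * (h * γ)) + h * (γ * (L * |σ|))) := hfinal
    _ = (c * (M * c + L)) * |σ| * h * γ := by ring
    _ ≤ (c * (M * c + L) + 1) * |σ| * h * γ := by
        have hnn : 0 ≤ |σ| * h * γ := by positivity
        nlinarith
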